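/- Let W(k) be row-stochastic matrices whose positive entries are bounded below by α > 0, and suppose for every t ≥ 0 the product W(t+h)···W(t+1) is scrambling. Then the backward product W(k)···W(1) converges as k → ∞ to a rank-one matrix 𝟏ξᵀ, and moreover τ(W(mh)···W(1)) ≤ (1-α^h)^m, i.e., convergence is exponential with rate at least (1-α^h)^{1/h}. -/

import Mathlib

open MeasureTheory Filter

def IsStochastic {n : ℕ} (A : Matrix (Fin n) (Fin n) ℝ) : Prop :=
  (∀ i j, 0 ≤ A i j) ∧ ∀ i, ∑ j, A i j = 1

noncomputable def tau {n : ℕ} (A : Matrix (Fin n) (Fin n) ℝ) : ℝ :=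
  1 - ⨅ p : Fin n × Fin n, ∑ s, min (A p.1 s) (A p.2 s)

def Scrambling {n : ℕ} (A : Matrix (Fin n) (Fin n) ℝ) : Prop :=
  ∀ i j, ∃ s, 0 < A i s ∧ 0 < A j s

noncomputable def spread {n : ℕ} (x : Fin n → ℝ) : ℝ := (⨆ i, x i) - ⨅ i, x i

def backProd {n : ℕ} (W : ℕ → Matrix (Fin n) (Fin n) ℝ) (k : ℕ) : ℕ → Matrix (Fin n) (Fin n) ℝ
  | 0 => 1
  | h + 1 => W (k + h + 1) * backProd W k h

-- helper lemmas
lemma IsStochastic.mul {n : ℕ} {A B : Matrix (Fin n) (Fin n) ℝ}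
    (hA : IsStochastic A) (hB : IsStochastic B) : IsStochastic (A * B) := by
  constructor
  · intro i j
    rw [Matrix.mul_apply]
    exact Finset.sum_nonneg fun s _ => mul_nonneg (hA.1 i s) (hB.1 s j)
  · intro i
    simp_rw [Matrix.mul_apply]
    rw [Finset.sum_comm]
    simp_rw [← Finset.mul_sum, hB.2]
    simpa using hA.2 i

lemma IsStochastic.one {n : ℕ} : IsStochastic (1 : Matrix (Fin n) (Fin n) ℝ) := by
  constructor
  · intro i j
    by_cases hij : i = j <;> simp [Matrix.one_apply, hij]
  · intro i; simp [Matrix.one_apply]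

lemma backProd_stochastic {n : ℕ} (W : ℕ → Matrix (Fin n) (Fin n) ℝ)
    (hstoch : ∀ k, IsStochastic (W k)) (k : ℕ) : ∀ m, IsStochastic (backProd W k m)
  | 0 => IsStochastic.one
  | m + 1 => (hstoch (k + m + 1)).mul (backProd_stochastic W hstoch k m)

lemma entry_le_one {n : ℕ} {A : Matrix (Fin n) (Fin n) ℝ} (hA : IsStochastic A)
    (i j : Fin n) : A i j ≤ 1 := by
  calc A i j ≤ ∑ s, A i s := Finset.single_le_sum (fun s _ => hA.1 i s) (Finset.mem_univ j)
  _ = 1 := hA.2 i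

lemma tau_nonneg {n : ℕ} (hn : 0 < n) {A : Matrix (Fin n) (Fin n) ℝ} (hA : IsStochastic A) :
    0 ≤ tau A := by
  have i0 : Fin n := ⟨0, hn⟩
  have h1 : (⨅ p : Fin n × Fin n, ∑ s, min (A p.1 s) (A p.2 s)) ≤ 1 := by
    have := ciInf_le (f := fun p : Fin n × Fin n => ∑ s, min (A p.1 s) (A p.2 s))
      (Finite.bddBelow_range _) (i0, i0)
    simpa [hA.2 i0] using this
  simpa [tau] using h1

lemma tau_le_one {n : ℕ} {A : Matrix (Fin n) (Fin n) ℝ} (hA : IsStochastic A) :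
    tau A ≤ 1 := by
  have h1 : (0:ℝ) ≤ ⨅ p : Fin n × Fin n, ∑ s, min (A p.1 s) (A p.2 s) := by
    rcases Nat.eq_zero_or_pos n with h | h
    · subst h; simp [iInf_of_empty]  -- empty Fin 0 × Fin 0 : ciInf of empty is sSup ∅ = 0
    · haveI : Nonempty (Fin n) := ⟨⟨0, h⟩⟩
      apply le_ciInf
      intro p
      exact Finset.sum_nonneg fun s _ => le_min (hA.1 p.1 s) (hA.1 p.2 s)
  simp [tau]; linarith

lemma spread_nonneg {n : ℕ} (hn : 0 < n) (x : Fin n → ℝ) : 0 ≤ spread x := by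
  haveI : Nonempty (Fin n) := ⟨⟨0, hn⟩⟩
  have h1 : (⨅ i, x i) ≤ ⨆ i, x i :=
    le_trans (ciInf_le (Finite.bddBelow_range _) (Classical.arbitrary _))
      (le_ciSup (Finite.bddAbove_range _) (Classical.arbitrary _))
  simpa [spread] using h1

lemma spread_mulVec_le {n : ℕ} (hn : 0 < n) {A : Matrix (Fin n) (Fin n) ℝ}
    (hA : IsStochastic A) (x : Fin n → ℝ) :
    spread (A.mulVec x) ≤ tau A * spread x := by
  haveI : Nonempty (Fin n) := ⟨⟨0, hn⟩⟩
  set M := ⨆ i, x i with hM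
  set m := ⨅ i, x i with hm
  have hxM : ∀ s, x s ≤ M := fun s => le_ciSup (Finite.bddAbove_range _) s
  have hmx : ∀ s, m ≤ x s := fun s => ciInf_le (Finite.bddBelow_range _) s
  have hspx : spread x = M - m := rfl
  have key : ∀ i j, A.mulVec x i - A.mulVec x j ≤ tau A * (M - m) := by
    intro i j
    set g : Fin n → ℝ := fun s => min (A i s) (A j s) with hg
    set c : ℝ := 1 - ∑ s, g s with hc
    have hcτ : c ≤ tau A := by
      have := ciInf_le (f := fun p : Fin n × Fin n => ∑ s, min (A p.1 s) (A p.2 s))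
        (Finite.bddBelow_range _) (i, j)
      simp only [tau, hc]
      linarith [this]
    have hgi : ∀ s, g s ≤ A i s := fun s => min_le_left _ _
    have hgj : ∀ s, g s ≤ A j s := fun s => min_le_right _ _
    have hsum_i : ∑ s, (A i s - g s) = c := by
      rw [Finset.sum_sub_distrib, hA.2 i, hc]
    have hsum_j : ∑ s, (A j s - g s) = c := by
      rw [Finset.sum_sub_distrib, hA.2 j, hc]
    have hdiff : A.mulVec x i - A.mulVec x j
        = ∑ s, (A i s - g s) * x s - ∑ s, (A j s - g s) * x s := by
      simp only [Matrix.mulVec, dotProduct]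
      rw [← Finset.sum_sub_distrib, ← Finset.sum_sub_distrib]
      congr 1; ext s; ring
    have hub : ∑ s, (A i s - g s) * x s ≤ c * M := by
      rw [← hsum_i, Finset.sum_mul]
      exact Finset.sum_le_sum fun s _ =>
        mul_le_mul_of_nonneg_left (hxM s) (by linarith [hgi s])
    have hlb : c * m ≤ ∑ s, (A j s - g s) * x s := by
      rw [← hsum_j, Finset.sum_mul]
      exact Finset.sum_le_sum fun s _ =>
        mul_le_mul_of_nonneg_left (hmx s) (by linarith [hgj s])
    have hcnn : 0 ≤ c := by
      rw [← hsum_i]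
      exact Finset.sum_nonneg fun s _ => by linarith [hgi s]
    have hMm : m ≤ M := le_trans (hmx ⟨0, hn⟩) (hxM ⟨0, hn⟩)
    calc A.mulVec x i - A.mulVec x j ≤ c * M - c * m := by rw [hdiff]; linarith
    _ = c * (M - m) := by ring
    _ ≤ tau A * (M - m) := mul_le_mul_of_nonneg_right hcτ (by linarith)
  rw [spread, hspx, sub_le_iff_le_add]
  apply ciSup_le
  intro i
  rw [← sub_le_iff_le_add']
  apply le_ciInf
  intro j
  rw [sub_le_iff_le_add, ← sub_le_iff_le_add']
  exact key i j

lemma tau_le_of_spread {n : ℕ} (hn : 0 < n) {A : Matrix (Fin n) (Fin n) ℝ}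
    (hA : IsStochastic A) {C : ℝ} (hC : 0 ≤ C)
    (hsp : ∀ x, spread (A.mulVec x) ≤ C * spread x) : tau A ≤ C := by
  haveI : Nonempty (Fin n) := ⟨⟨0, hn⟩⟩
  have key : ∀ p : Fin n × Fin n, 1 - C ≤ ∑ s, min (A p.1 s) (A p.2 s) := by
    rintro ⟨i, j⟩
    set x : Fin n → ℝ := fun s => if A j s < A i s then 1 else 0 with hx
    have hx01 : ∀ s, 0 ≤ x s ∧ x s ≤ 1 := by
      intro s; constructor <;> simp only [hx] <;> split <;> norm_num
    have hspx : spread x ≤ 1 := by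
      have h1 : (⨆ s, x s) ≤ 1 := ciSup_le fun s => (hx01 s).2
      have h2 : (0:ℝ) ≤ ⨅ s, x s := le_ciInf fun s => (hx01 s).1
      simp only [spread]; linarith
    have heq : A.mulVec x i - A.mulVec x j = 1 - ∑ s, min (A i s) (A j s) := by
      simp only [Matrix.mulVec, dotProduct]
      rw [← Finset.sum_sub_distrib]
      rw [show (1:ℝ) = ∑ s, A i s from (hA.2 i).symm, ← Finset.sum_sub_distrib]
      apply Finset.sum_congr rfl
      intro s _
      by_cases hs : A j s < A i s
      · simp [hx, hs, min_eq_right hs.le]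
      · simp [hx, hs, min_eq_left (not_lt.1 hs)]
    have hle : A.mulVec x i - A.mulVec x j ≤ spread (A.mulVec x) := by
      have h1 : A.mulVec x i ≤ ⨆ s, A.mulVec x s := le_ciSup (Finite.bddAbove_range _) i
      have h2 : (⨅ s, A.mulVec x s) ≤ A.mulVec x j := ciInf_le (Finite.bddBelow_range _) j
      simp only [spread]; linarith
    have := le_trans (hsp x) (by nlinarith [hspx] : C * spread x ≤ C)
    linarith [heq ▸ hle]
  have : 1 - C ≤ ⨅ p : Fin n × Fin n, ∑ s, min (A p.1 s) (A p.2 s) := le_ciInf key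
  simp only [tau]; linarith

lemma tau_mul_le {n : ℕ} (hn : 0 < n) {A B : Matrix (Fin n) (Fin n) ℝ}
    (hA : IsStochastic A) (hB : IsStochastic B) : tau (A * B) ≤ tau A * tau B := by
  apply tau_le_of_spread hn (hA.mul hB)
    (mul_nonneg (tau_nonneg hn hA) (tau_nonneg hn hB))
  intro x
  rw [← Matrix.mulVec_mulVec]
  calc spread (A.mulVec (B.mulVec x)) ≤ tau A * spread (B.mulVec x) :=
        spread_mulVec_le hn hA _
  _ ≤ tau A * (tau B * spread x) :=
        mul_le_mul_of_nonneg_left (spread_mulVec_le hn hB x) (tau_nonneg hn hA)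
  _ = tau A * tau B * spread x := by ring

lemma backProd_entry_lb {n : ℕ} (W : ℕ → Matrix (Fin n) (Fin n) ℝ)
    (hstoch : ∀ k, IsStochastic (W k)) {α : ℝ} (hα0 : 0 < α) (hα1 : α ≤ 1)
    (hbdd : ∀ k i j, 0 < W k i j → α ≤ W k i j) (t : ℕ) :
    ∀ l i j, 0 < backProd W t l i j → α ^ l ≤ backProd W t l i j := by
  intro l
  induction l with
  | zero =>
    intro i j hpos
    simp only [backProd] at *
    by_cases hij : i = j
    · simp [Matrix.one_apply, hij]
    · simp [Matrix.one_apply, hij] at hpos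
  | succ l ih =>
    intro i j hpos
    simp only [backProd, Matrix.mul_apply] at hpos ⊢
    have hnn : ∀ s, 0 ≤ W (t + l + 1) i s * backProd W t l s j := fun s =>
      mul_nonneg ((hstoch _).1 i s) ((backProd_stochastic W hstoch t l).1 s j)
    obtain ⟨s, -, hs⟩ : ∃ s ∈ Finset.univ, 0 < W (t + l + 1) i s * backProd W t l s j := by
      by_contra hcon
      push_neg at hcon
      have : ∑ s, W (t + l + 1) i s * backProd W t l s j ≤ 0 :=
        Finset.sum_nonpos fun s hsu => hcon s hsu
      linarith
    obtain ⟨hW, hB⟩ : 0 < W (t + l + 1) i s ∧ 0 < backProd W t l s j := by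
      rcases mul_pos_iff.1 hs with h | ⟨h1, h2⟩
      · exact h
      · exact absurd h1 (not_lt.2 ((hstoch _).1 i s))
    have h1 : α ≤ W (t + l + 1) i s := hbdd _ _ _ hW
    have h2 : α ^ l ≤ backProd W t l s j := ih s j hB
    calc α ^ (l + 1) = α * α ^ l := by ring
    _ ≤ W (t + l + 1) i s * backProd W t l s j :=
        mul_le_mul h1 h2 (by positivity) ((hstoch _).1 i s)
    _ ≤ ∑ s', W (t + l + 1) i s' * backProd W t l s' j :=
        Finset.single_le_sum (fun s' _ => hnn s') (Finset.mem_univ s)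

lemma tau_scrambling_le {n : ℕ} (hn : 0 < n) {A : Matrix (Fin n) (Fin n) ℝ}
    (hA : IsStochastic A) {γ : ℝ} (hγ : 0 ≤ γ) (hscr : Scrambling A)
    (hlb : ∀ i j, 0 < A i j → γ ≤ A i j) : tau A ≤ 1 - γ := by
  haveI : Nonempty (Fin n) := ⟨⟨0, hn⟩⟩
  have key : ∀ p : Fin n × Fin n, γ ≤ ∑ s, min (A p.1 s) (A p.2 s) := by
    rintro ⟨i, j⟩
    obtain ⟨s, hi, hj⟩ := hscr i j
    calc γ ≤ min (A i s) (A j s) := le_min (hlb i s hi) (hlb j s hj)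
    _ ≤ ∑ s', min (A i s') (A j s') :=
        Finset.single_le_sum (fun s' _ => le_min (hA.1 i s') (hA.1 j s')) (Finset.mem_univ s)
  have := le_ciInf key
  simp only [tau]; linarith

lemma backProd_split {n : ℕ} (W : ℕ → Matrix (Fin n) (Fin n) ℝ) (b : ℕ) :
    ∀ a, backProd W 0 (b + a) = backProd W b a * backProd W 0 b := by
  intro a
  induction a with
  | zero => simp [backProd]
  | succ a ih =>
    show backProd W 0 (b + a + 1) = _
    simp only [backProd]
    rw [Nat.zero_add, ih, ← Matrix.mul_assoc]

lemma tau_block {n : ℕ} (hn : 0 < n) (W : ℕ → Matrix (Fin n) (Fin n) ℝ)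
    (hstoch : ∀ k, IsStochastic (W k)) {α : ℝ} (hα0 : 0 < α) (hα1 : α ≤ 1)
    (hbdd : ∀ k i j, 0 < W k i j → α ≤ W k i j) (h : ℕ)
    (hscr : ∀ t : ℕ, Scrambling (backProd W t h)) (t : ℕ) :
    tau (backProd W t h) ≤ 1 - α ^ h :=
  tau_scrambling_le hn (backProd_stochastic W hstoch t h) (by positivity) (hscr t)
    (backProd_entry_lb W hstoch hα0 hα1 hbdd t h)

lemma tau_mh {n : ℕ} (hn : 0 < n) (W : ℕ → Matrix (Fin n) (Fin n) ℝ)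
    (hstoch : ∀ k, IsStochastic (W k)) {α : ℝ} (hα0 : 0 < α) (hα1 : α ≤ 1)
    (hbdd : ∀ k i j, 0 < W k i j → α ≤ W k i j) (h : ℕ)
    (hscr : ∀ t : ℕ, Scrambling (backProd W t h)) :
    ∀ m : ℕ, tau (backProd W 0 (m * h)) ≤ (1 - α ^ h) ^ m := by
  have hα1' : 0 ≤ 1 - α ^ h := by
    have : α ^ h ≤ 1 := pow_le_one₀ hα0.le hα1
    linarith
  intro m
  induction m with
  | zero => simpa [backProd] using tau_le_one (IsStochastic.one (n := n))
  | succ m ih =>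
    have hsplit : backProd W 0 ((m + 1) * h) = backProd W (m * h) h * backProd W 0 (m * h) := by
      rw [show (m + 1) * h = m * h + h by ring]
      exact backProd_split W (m * h) h
    rw [hsplit]
    calc tau (backProd W (m * h) h * backProd W 0 (m * h))
        ≤ tau (backProd W (m * h) h) * tau (backProd W 0 (m * h)) :=
          tau_mul_le hn (backProd_stochastic W hstoch _ _) (backProd_stochastic W hstoch _ _)
    _ ≤ (1 - α ^ h) * (1 - α ^ h) ^ m := by
        apply mul_le_mul (tau_block hn W hstoch hα0 hα1 hbdd h hscr _) ih
          (tau_nonneg hn (backProd_stochastic W hstoch _ _)) hα1'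
    _ = (1 - α ^ h) ^ (m + 1) := by ring

lemma inf_mulVec_mono {n : ℕ} (hn : 0 < n) {A : Matrix (Fin n) (Fin n) ℝ}
    (hA : IsStochastic A) (x : Fin n → ℝ) :
    (⨅ i, x i) ≤ ⨅ i, A.mulVec x i := by
  haveI : Nonempty (Fin n) := ⟨⟨0, hn⟩⟩
  apply le_ciInf
  intro i
  calc (⨅ i, x i) = ∑ s, A i s * ⨅ i', x i' := by
        rw [← Finset.sum_mul, hA.2 i, one_mul]
  _ ≤ ∑ s, A i s * x s := Finset.sum_le_sum fun s _ =>
        mul_le_mul_of_nonneg_left (ciInf_le (Finite.bddBelow_range _) s) (hA.1 i s)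
  _ = A.mulVec x i := rfl

lemma col_succ {n : ℕ} (W : ℕ → Matrix (Fin n) (Fin n) ℝ) (k : ℕ) (j : Fin n) :
    (fun i => backProd W 0 (k + 1) i j) = (W (k + 1)).mulVec (fun i => backProd W 0 k i j) := by
  funext i
  simp only [backProd, Nat.zero_add, Matrix.mul_apply, Matrix.mulVec, dotProduct]

lemma spread_single_le_one {n : ℕ} (hn : 0 < n) (j : Fin n) :
    spread (fun i => if i = j then (1:ℝ) else 0) ≤ 1 := by
  haveI : Nonempty (Fin n) := ⟨⟨0, hn⟩⟩
  have h1 : (⨆ i, if i = j then (1:ℝ) else 0) ≤ 1 := ciSup_le fun i => by split <;> norm_num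
  have h2 : (0:ℝ) ≤ ⨅ i, if i = j then (1:ℝ) else 0 := le_ciInf fun i => by split <;> norm_num
  simp only [spread]; linarith

lemma col_as_mulVec {n : ℕ} {A : Matrix (Fin n) (Fin n) ℝ} (j : Fin n) :
    (fun i => A i j) = A.mulVec (fun i => if i = j then (1:ℝ) else 0) := by
  funext i
  simp only [Matrix.mulVec, dotProduct]
  rw [Finset.sum_eq_single j] <;> simp +contextual

theorem backward_product_exponential_convergence {n : ℕ} (hn : 0 < n)
    (W : ℕ → Matrix (Fin n) (Fin n) ℝ) (hstoch : ∀ k, IsStochastic (W k))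
    (α : ℝ) (hα0 : 0 < α) (hα1 : α ≤ 1)
    (hbdd : ∀ k i j, 0 < W k i j → α ≤ W k i j)
    (h : ℕ) (hh : 1 ≤ h) (hscr : ∀ t : ℕ, Scrambling (backProd W t h)) :
    (∃ ξ : Fin n → ℝ,
      Tendsto (fun k => backProd W 0 k) atTop (nhds (Matrix.of fun _ j => ξ j))) ∧
    ∀ m : ℕ, tau (backProd W 0 (m * h)) ≤ (1 - α ^ h) ^ m := by
  haveI : Nonempty (Fin n) := ⟨⟨0, hn⟩⟩
  have htmh := tau_mh hn W hstoch hα0 hα1 hbdd h hscr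
  refine ⟨?_, htmh⟩
  have hPstoch : ∀ k, IsStochastic (backProd W 0 k) := backProd_stochastic W hstoch 0
  set P : ℕ → Matrix (Fin n) (Fin n) ℝ := fun k => backProd W 0 k with hP
  set mcol : ℕ → Fin n → ℝ := fun k j => ⨅ i, P k i j with hmcol
  set scol : ℕ → Fin n → ℝ := fun k j => spread (fun i => P k i j) with hscol
  -- mcol is monotone in k
  have hmono : ∀ j, Monotone fun k => mcol k j := by
    intro j
    apply monotone_nat_of_le_succ
    intro k
    have := inf_mulVec_mono hn (hstoch (k + 1)) (fun i => P k i j)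
    rw [← col_succ W k j] at this
    exact this
  -- mcol bounded above by 1
  have hbddM : ∀ j, BddAbove (Set.range fun k => mcol k j) := by
    intro j
    refine ⟨1, ?_⟩
    rintro _ ⟨k, rfl⟩
    exact le_trans (ciInf_le (Finite.bddBelow_range _) ⟨0, hn⟩)
      (entry_le_one (hPstoch k) _ j)
  set ξ : Fin n → ℝ := fun j => ⨆ k, mcol k j with hξ
  have hmlim : ∀ j, Tendsto (fun k => mcol k j) atTop (nhds (ξ j)) := fun j =>
    tendsto_atTop_ciSup (hmono j) (hbddM j)
  -- scol bounds
  have hscol_nonneg : ∀ k j, 0 ≤ scol k j := fun k j => spread_nonneg hn _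
  have hscol_anti : ∀ j, Antitone fun k => scol k j := by
    intro j
    apply antitone_nat_of_succ_le
    intro k
    have h1 : scol (k + 1) j ≤ tau (W (k + 1)) * scol k j := by
      simp only [hscol]
      rw [col_succ W k j]
      exact spread_mulVec_le hn (hstoch (k + 1)) _
    calc scol (k + 1) j ≤ tau (W (k + 1)) * scol k j := h1
    _ ≤ 1 * scol k j :=
        mul_le_mul_of_nonneg_right (tau_le_one (hstoch (k + 1))) (hscol_nonneg k j)
    _ = scol k j := one_mul _
  have hscol_tau : ∀ k j, scol k j ≤ tau (P k) := by
    intro k j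
    have h1 : scol k j ≤ tau (P k) * spread (fun i => if i = j then (1:ℝ) else 0) := by
      simp only [hscol]
      rw [col_as_mulVec j]
      exact spread_mulVec_le hn (hPstoch k) _
    calc scol k j ≤ tau (P k) * spread (fun i => if i = j then (1:ℝ) else 0) := h1
    _ ≤ tau (P k) * 1 :=
        mul_le_mul_of_nonneg_left (spread_single_le_one hn j) (tau_nonneg hn (hPstoch k))
    _ = tau (P k) := mul_one _
  -- scol tends to 0
  have hrlt : 1 - α ^ h < 1 := by
    have : 0 < α ^ h := pow_pos hα0 h
    linarith
  have hrnn : 0 ≤ 1 - α ^ h := by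
    have : α ^ h ≤ 1 := pow_le_one₀ hα0.le hα1
    linarith
  have hdiv_top : Tendsto (fun k : ℕ => k / h) atTop atTop := by
    apply Filter.tendsto_atTop_atTop.2
    intro b
    exact ⟨b * h, fun k hk => (Nat.le_div_iff_mul_le (by omega)).2 hk⟩
  have hgeo : Tendsto (fun k : ℕ => (1 - α ^ h) ^ (k / h)) atTop (nhds 0) :=
    (tendsto_pow_atTop_nhds_zero_of_lt_one hrnn hrlt).comp hdiv_top
  have hscol_lim : ∀ j, Tendsto (fun k => scol k j) atTop (nhds 0) := by
    intro j
    apply squeeze_zero (fun k => hscol_nonneg k j) _ hgeo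
    intro k
    calc scol k j ≤ scol (k / h * h) j := hscol_anti j (Nat.div_mul_le_self k h)
    _ ≤ tau (P (k / h * h)) := hscol_tau _ j
    _ ≤ (1 - α ^ h) ^ (k / h) := htmh (k / h)
  -- entrywise convergence
  refine ⟨ξ, ?_⟩
  have hentry : ∀ i j, Tendsto (fun k => P k i j) atTop (nhds (ξ j)) := by
    intro i j
    have hlow : ∀ k, mcol k j ≤ P k i j := fun k => ciInf_le (Finite.bddBelow_range _) i
    have hhigh : ∀ k, P k i j ≤ mcol k j + scol k j := by
      intro k
      have h1 : P k i j ≤ ⨆ i', P k i' j := le_ciSup (f := fun i' => P k i' j) (Finite.bddAbove_range _) i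
      simp only [hscol, hmcol, spread] at *
      linarith
    have hup : Tendsto (fun k => mcol k j + scol k j) atTop (nhds (ξ j)) := by
      have := (hmlim j).add (hscol_lim j)
      simpa using this
    exact tendsto_of_tendsto_of_tendsto_of_le_of_le (hmlim j) hup hlow hhigh
  refine tendsto_pi_nhds.2 ?_
  intro i
  rw [tendsto_pi_nhds]
  intro j
  exact hentry i j
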